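/- arXiv:2306.15906 — 7 statements merged into one kernel-verified Lean document; each statement's English description precedes it below -/
import Mathlib

section
/- Let F : Y → 𝒢₊(Z) and G : X → 𝒫₊(Y) be set-valued maps. If F and G are both convex, then the composition F∘G is convex: λ(F∘G)(x¹) + (1−λ)(F∘G)(x²) ⊆ (F∘G)(λx¹ + (1−λ)x²) for all x¹, x² ∈ X and λ ∈ [0,1]. -/
open Set Pointwise

/-- The composition of two set-valued maps:
`(F ∘ G)(x) := cl co (⋃ y ∈ G x, F y)`. -/
noncomputable def svComp {X Y Z : Type*} [AddCommGroup Z] [Module ℝ Z] [TopologicalSpace Z]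
    (F : Y → Set Z) (G : X → Set Y) (x : X) : Set Z :=
  closure (convexHull ℝ (⋃ y ∈ G x, F y))

/-- A set-valued map is convex if
`λ R(x¹) + (1-λ) R(x²) ⊆ R(λ x¹ + (1-λ) x²)` for all `x¹, x²` and `λ ∈ [0,1]`. -/
def SVConvex {X Z : Type*} [AddCommGroup X] [Module ℝ X] [AddCommGroup Z] [Module ℝ Z]
    (R : X → Set Z) : Prop :=
  ∀ x1 x2 : X, ∀ l ∈ Set.Icc (0 : ℝ) 1,
    l • R x1 + (1 - l) • R x2 ⊆ R (l • x1 + (1 - l) • x2)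

/-- If `F` and `G` are convex set-valued maps, then so is their
composition `F ∘ G`. -/
theorem stmt_2 {X Y Z : Type*}
    [AddCommGroup X] [Module ℝ X] [TopologicalSpace X] [IsTopologicalAddGroup X]
    [ContinuousSMul ℝ X] [LocallyConvexSpace ℝ X] [T2Space X]
    [AddCommGroup Y] [Module ℝ Y] [TopologicalSpace Y] [IsTopologicalAddGroup Y]
    [ContinuousSMul ℝ Y] [LocallyConvexSpace ℝ Y] [T2Space Y]
    [AddCommGroup Z] [Module ℝ Z] [TopologicalSpace Z] [IsTopologicalAddGroup Z]
    [ContinuousSMul ℝ Z] [LocallyConvexSpace ℝ Z] [T2Space Z]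
    (Yp : Set Y) (hYpconv : Convex ℝ Yp) (hYp0 : (0 : Y) ∈ Yp)
    (hYpcone : ∀ c : ℝ, 0 < c → c • Yp ⊆ Yp) (hYpcl : IsClosed Yp)
    (Zp : Set Z) (hZpconv : Convex ℝ Zp) (hZp0 : (0 : Z) ∈ Zp)
    (hZpcone : ∀ c : ℝ, 0 < c → c • Zp ⊆ Zp) (hZpcl : IsClosed Zp)
    -- `F` maps into 𝒢₊(Z) and `G` maps into 𝒫₊(Y)
    (F : Y → Set Z) (hF : ∀ y, F y = closure (convexHull ℝ (F y + Zp)))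
    (G : X → Set Y) (hG : ∀ x, G x + Yp = G x)
    (hFconv : SVConvex F) (hGconv : SVConvex G) :
    SVConvex (svComp F G) := by
  intro x1 x2 l hl
  set A := ⋃ y ∈ G x1, F y with hA
  set B := ⋃ y ∈ G x2, F y with hB
  set C := ⋃ y ∈ G (l • x1 + (1 - l) • x2), F y with hC
  have hABC : l • A + (1 - l) • B ⊆ C := by
    rintro _ ⟨_, ⟨z1, hz1, rfl⟩, _, ⟨z2, hz2, rfl⟩, rfl⟩
    rw [hA, mem_iUnion₂] at hz1
    rw [hB, mem_iUnion₂] at hz2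
    obtain ⟨y1, hy1, hz1⟩ := hz1
    obtain ⟨y2, hy2, hz2⟩ := hz2
    have hy : l • y1 + (1 - l) • y2 ∈ G (l • x1 + (1 - l) • x2) :=
      hGconv x1 x2 l hl (Set.add_mem_add ⟨y1, hy1, rfl⟩ ⟨y2, hy2, rfl⟩)
    have hz : l • z1 + (1 - l) • z2 ∈ F (l • y1 + (1 - l) • y2) :=
      hFconv y1 y2 l hl (Set.add_mem_add ⟨z1, hz1, rfl⟩ ⟨z2, hz2, rfl⟩)
    exact mem_iUnion₂.2 ⟨_, hy, hz⟩
  show l • closure (convexHull ℝ A) + (1 - l) • closure (convexHull ℝ B) ⊆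
      closure (convexHull ℝ C)
  intro w hw
  obtain ⟨p, hp, q, hq, rfl⟩ := hw
  obtain ⟨a, ha, rfl⟩ := hp
  obtain ⟨b, hb, rfl⟩ := hq
  have ha' : l • a ∈ closure (l • convexHull ℝ A) := smul_closure_subset l _ ⟨a, ha, rfl⟩
  have hb' : (1 - l) • b ∈ closure ((1 - l) • convexHull ℝ B) :=
    smul_closure_subset (1 - l) _ ⟨b, hb, rfl⟩
  have hsum : l • a + (1 - l) • b ∈
      closure (l • convexHull ℝ A + (1 - l) • convexHull ℝ B) :=
    map_mem_closure₂ continuous_add ha' hb' fun _ hx _ hy => Set.add_mem_add hx hy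
  refine closure_mono ?_ hsum
  rw [← convexHull_smul, ← convexHull_smul, ← convexHull_add]
  exact convexHull_mono hABC
end

section
/- Let F : Y → 𝒢₊(Z) and G : X → 𝒫₊(Y) be set-valued maps. Then for every z* ∈ Z₊⁺ \ {0} and every x ∈ X, the scalarization of the composition satisfies φ_{F∘G,z*}(x) = inf_{y ∈ G(x)} φ_{F,z*}(y) (equality in the extended reals). -/
open Set Pointwise

/-- The scalarization `φ_{R,l}(x) := inf_{z ∈ R(x)} l(z)` of a set-valued map, as an
extended-real-valued function (the infimum over the empty set is `+∞`). -/
noncomputable def scal {X Z : Type*} (R : X → Set Z) (l : Z → ℝ) (x : X) : EReal :=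
  ⨅ z ∈ R x, ((l z : ℝ) : EReal)


private lemma aux_closure_hull_inf {Z : Type*} [AddCommGroup Z] [Module ℝ Z] [TopologicalSpace Z]
    (zs : Z →L[ℝ] ℝ) (S : Set Z) :
    (⨅ z ∈ closure (convexHull ℝ S), ((zs z : ℝ) : EReal)) = ⨅ z ∈ S, ((zs z : ℝ) : EReal) := by
  set m : EReal := ⨅ z ∈ S, ((zs z : ℝ) : EReal) with hm
  have hle : (⨅ z ∈ closure (convexHull ℝ S), ((zs z : ℝ) : EReal)) ≤ m :=
    le_iInf₂ fun z hz => iInf₂_le z (subset_closure (subset_convexHull ℝ S hz))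
  refine le_antisymm hle ?_
  rcases eq_or_ne m ⊥ with h | h
  · simp [h]
  rcases eq_or_ne m ⊤ with h2 | h2
  · have hS : S = ∅ := by
      by_contra hne
      obtain ⟨z, hz⟩ := nonempty_iff_ne_empty.2 hne
      have := iInf₂_le (f := fun z (_ : z ∈ S) => ((zs z : ℝ) : EReal)) z hz
      rw [← hm, h2] at this
      exact (EReal.coe_ne_top _) (top_le_iff.1 this)
    simp [hS]
  · set r : ℝ := m.toReal with hrdef
    have hmr : m = (r : EReal) := (EReal.coe_toReal h2 h).symm
    have hCconv : Convex ℝ (⇑zs ⁻¹' Ici r) := (convex_Ici r).linear_preimage (zs : Z →ₗ[ℝ] ℝ)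
    have hCcl : IsClosed (⇑zs ⁻¹' Ici r) := isClosed_Ici.preimage zs.continuous
    have hsub : S ⊆ ⇑zs ⁻¹' Ici r := by
      intro z hz
      have : m ≤ ((zs z : ℝ) : EReal) := iInf₂_le z hz
      rw [hmr] at this
      exact EReal.coe_le_coe_iff.1 this
    have hbig : closure (convexHull ℝ S) ⊆ ⇑zs ⁻¹' Ici r :=
      closure_minimal (convexHull_min hsub hCconv) hCcl
    rw [hmr]
    exact le_iInf₂ fun z hz => EReal.coe_le_coe_iff.2 (hbig hz)

/-- For every `z* ∈ Z₊⁺ \ {0}` and every `x`, the scalarization of the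
composition satisfies `φ_{F∘G,z*}(x) = inf_{y ∈ G(x)} φ_{F,z*}(y)`. -/
theorem stmt_3 {X Y Z : Type*}
    [AddCommGroup X] [Module ℝ X] [TopologicalSpace X] [IsTopologicalAddGroup X]
    [ContinuousSMul ℝ X] [LocallyConvexSpace ℝ X] [T2Space X]
    [AddCommGroup Y] [Module ℝ Y] [TopologicalSpace Y] [IsTopologicalAddGroup Y]
    [ContinuousSMul ℝ Y] [LocallyConvexSpace ℝ Y] [T2Space Y]
    [AddCommGroup Z] [Module ℝ Z] [TopologicalSpace Z] [IsTopologicalAddGroup Z]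
    [ContinuousSMul ℝ Z] [LocallyConvexSpace ℝ Z] [T2Space Z]
    (Yp : Set Y) (hYpconv : Convex ℝ Yp) (hYp0 : (0 : Y) ∈ Yp)
    (hYpcone : ∀ c : ℝ, 0 < c → c • Yp ⊆ Yp) (hYpcl : IsClosed Yp)
    (Zp : Set Z) (hZpconv : Convex ℝ Zp) (hZp0 : (0 : Z) ∈ Zp)
    (hZpcone : ∀ c : ℝ, 0 < c → c • Zp ⊆ Zp) (hZpcl : IsClosed Zp)
    -- `F` maps into 𝒢₊(Z) and `G` maps into 𝒫₊(Y)
    (F : Y → Set Z) (hF : ∀ y, F y = closure (convexHull ℝ (F y + Zp)))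
    (G : X → Set Y) (hG : ∀ x, G x + Yp = G x)
    -- `z* ∈ Z₊⁺ \ {0}`
    (zs : Z →L[ℝ] ℝ) (hzs : ∀ z ∈ Zp, 0 ≤ zs z) (hzs0 : zs ≠ 0)
    (x : X) :
    scal (svComp F G) (⇑zs) x = ⨅ y ∈ G x, scal F (⇑zs) y := by
  simp only [scal, svComp]
  rw [aux_closure_hull_inf]
  simp only [iInf_iUnion]
end

section
/- Let X be preordered by a closed convex cone X₊ such that X₊♯ := {x ∈ X : ⟨x*,x⟩ > 0 for all x* ∈ X₊⁺ \ {0}} is nonempty. Let G : X → 𝒫₊(Y) be a scalarly lower semicontinuous set-valued map and let y* ∈ Y₊⁺ \ {0} be such that φ_{G,y*} is strictly decreasing, i.e., for all x¹, x² ∈ X: x² ∈ x¹ + X₊♯ if and only if φ_{G,y*}(x¹) > φ_{G,y*}(x²). Then for every y ∈ Y, the set A_y(y*) := {x ∈ X : ⟨y*,y⟩ ≥ φ_{G,y*}(x)} equals the closure of Ã_y(y*) := {x ∈ X : ⟨y*,y⟩ > φ_{G,y*}(x)}. -/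
open Set Pointwise

/-- Suppose `X₊♯ ≠ ∅` and `φ_{G,y*}` is strictly decreasing for some
`y* ∈ Y₊⁺ \ {0}`, with `G` scalarly lower semicontinuous. Then for every `y`, the set
`A_y(y*) = {x : ⟨y*,y⟩ ≥ φ_{G,y*}(x)}` is the closure of
`Ã_y(y*) = {x : ⟨y*,y⟩ > φ_{G,y*}(x)}`. -/
theorem stmt_14 {X Y : Type*}
    [AddCommGroup X] [Module ℝ X] [TopologicalSpace X] [IsTopologicalAddGroup X]
    [ContinuousSMul ℝ X] [LocallyConvexSpace ℝ X] [T2Space X]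
    [AddCommGroup Y] [Module ℝ Y] [TopologicalSpace Y] [IsTopologicalAddGroup Y]
    [ContinuousSMul ℝ Y] [LocallyConvexSpace ℝ Y] [T2Space Y]
    -- the preorder cone on `X`, with `X₊♯ ≠ ∅`
    (Xp : Set X) (hXpconv : Convex ℝ Xp) (hXp0 : (0 : X) ∈ Xp)
    (hXpcone : ∀ c : ℝ, 0 < c → c • Xp ⊆ Xp) (hXpcl : IsClosed Xp)
    (hXsharp :
      {x : X | ∀ l : X →L[ℝ] ℝ, (∀ w ∈ Xp, 0 ≤ l w) → l ≠ 0 → 0 < l x}.Nonempty)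
    -- the preorder cone on `Y`
    (Yp : Set Y) (hYpconv : Convex ℝ Yp) (hYp0 : (0 : Y) ∈ Yp)
    (hYpcone : ∀ c : ℝ, 0 < c → c • Yp ⊆ Yp) (hYpcl : IsClosed Yp)
    -- `G : X → 𝒫₊(Y)`, scalarly lower semicontinuous
    (G : X → Set Y) (hGval : ∀ x, G x + Yp = G x)
    (hGlsc : ∀ w : Y →L[ℝ] ℝ, (∀ y ∈ Yp, 0 ≤ w y) → w ≠ 0 →
      LowerSemicontinuous (scal G ⇑w))
    -- `y* ∈ Y₊⁺ \ {0}` such that `φ_{G,y*}` is strictly decreasing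
    (ys : Y →L[ℝ] ℝ) (hys : ∀ y ∈ Yp, 0 ≤ ys y) (hys0 : ys ≠ 0)
    (hdec : ∀ x1 x2 : X,
      (x2 - x1 ∈ {x : X | ∀ l : X →L[ℝ] ℝ, (∀ w ∈ Xp, 0 ≤ l w) → l ≠ 0 → 0 < l x} ↔
        scal G (⇑ys) x2 < scal G (⇑ys) x1))
    (y : Y) :
    {x : X | scal G (⇑ys) x ≤ ((ys y : ℝ) : EReal)} =
      closure {x : X | scal G (⇑ys) x < ((ys y : ℝ) : EReal)} := by
  obtain ⟨k, hk⟩ := hXsharp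
  have hlsc := hGlsc ys hys hys0
  apply Subset.antisymm
  · intro x hx
    have htend : Filter.Tendsto (fun t : ℝ => x + t • k) (nhdsWithin 0 (Set.Ioi 0)) (nhds x) := by
      have : Continuous fun t : ℝ => x + t • k :=
        continuous_const.add (continuous_id.smul continuous_const)
      have h0 := (this.tendsto 0).mono_left (nhdsWithin_le_nhds (s := Set.Ioi (0:ℝ)))
      simpa using h0
    refine mem_closure_of_tendsto htend ?_
    filter_upwards [self_mem_nhdsWithin] with t ht
    have hmem : (x + t • k) - x ∈
        {x : X | ∀ l : X →L[ℝ] ℝ, (∀ w ∈ Xp, 0 ≤ l w) → l ≠ 0 → 0 < l x} := by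
      rw [add_sub_cancel_left]
      intro l hl hl0
      have := hk l hl hl0
      rw [map_smul, smul_eq_mul]
      exact mul_pos ht this
    have hlt := (hdec x (x + t • k)).1 hmem
    exact lt_of_lt_of_le hlt hx
  · have hcl : IsClosed {x : X | scal G (⇑ys) x ≤ ((ys y : ℝ) : EReal)} := by
      have := lowerSemicontinuous_iff_isClosed_preimage.1 hlsc ((ys y : ℝ) : EReal)
      exact this
    exact closure_minimal (fun x hx => le_of_lt (show scal G (⇑ys) x < _ from hx)) hcl
end

section
/- Suppose Assumptions A and B hold, and let F : Y → 𝒢₊(Z), G : X → 𝒫₊(Y) be convex and scalarly lower semicontinuous set-valued maps. Fix x* ∈ X*, z* ∈ Z₊⁺ \ {0}, and define extended-real functions f(x,y,y*) := ⟨x*,x⟩ − φ_{F,z*}(y) if ⟨y*,y⟩ ≥ φ_{G,y*}(x) and −∞ otherwise, and f̃(x,y,y*) := ⟨x*,x⟩ − φ_{F,z*}(y) if ⟨y*,y⟩ > φ_{G,y*}(x) and −∞ otherwise. Then for every y* ∈ B_{Y*} \ {0}, sup_{(x,y) ∈ X×Y} f(x,y,y*) = sup_{(x,y) ∈ X×Y}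 f̃(x,y,y*). -/
open Set Pointwise

attribute [local instance] Classical.propDecidable

/-- The function `f(x,y) = ⟨x*,x⟩ - φ_{F,z*}(y)` if `⟨y*,y⟩ ≥ φ_{G,y*}(x)`, and `-∞`
otherwise. -/
noncomputable def fFun {X Y Z : Type*} (G : X → Set Y) (F : Y → Set Z)
    (xs : X → ℝ) (ys : Y → ℝ) (zs : Z → ℝ) (p : X × Y) : EReal :=
  if scal G ys p.1 ≤ ((ys p.2 : ℝ) : EReal) then
    ((xs p.1 : ℝ) : EReal) - scal F zs p.2
  else ⊥

/-- The function `f̃(x,y) = ⟨x*,x⟩ - φ_{F,z*}(y)` if `⟨y*,y⟩ > φ_{G,y*}(x)`, and `-∞`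
otherwise. -/
noncomputable def fTilde {X Y Z : Type*} (G : X → Set Y) (F : Y → Set Z)
    (xs : X → ℝ) (ys : Y → ℝ) (zs : Z → ℝ) (p : X × Y) : EReal :=
  if scal G ys p.1 < ((ys p.2 : ℝ) : EReal) then
    ((xs p.1 : ℝ) : EReal) - scal F zs p.2
  else ⊥


lemma scal_le {X Z : Type*} (R : X → Set Z) (l : Z → ℝ) {x : X} {z : Z} (hz : z ∈ R x) :
    scal R l x ≤ ((l z : ℝ) : EReal) := iInf₂_le z hz

lemma scal_lt_iff {X Z : Type*} (R : X → Set Z) (l : Z → ℝ) {x : X} {a : EReal} :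
    scal R l x < a ↔ ∃ z ∈ R x, ((l z : ℝ) : EReal) < a := by
  simp [scal, iInf_lt_iff]

lemma scal_combo {X Y : Type*} [AddCommGroup X] [Module ℝ X] [AddCommGroup Y] [Module ℝ Y]
    {G : X → Set Y} (hG : SVConvex G) {ys : Y → ℝ}
    (hlin : ∀ (c : ℝ) (a b : Y), ys (c • a + (1 - c) • b) = c * ys a + (1 - c) * ys b)
    {x x' : X} {t : ℝ} (hx : scal G ys x ≤ (t : EReal)) (hx' : scal G ys x' < (t : EReal))
    {l : ℝ} (hl0 : 0 < l) (hl1 : l < 1) :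
    scal G ys (l • x' + (1 - l) • x) < (t : EReal) := by
  obtain ⟨s, hs1, hs2⟩ := EReal.exists_between_coe_real hx'
  rw [EReal.coe_lt_coe_iff] at hs2
  have hts : 0 < t - s := by linarith
  set ε : ℝ := l * (t - s) / (2 * (1 - l)) with hε_def
  have h1l : 0 < 1 - l := by linarith
  have hε : 0 < ε := by positivity
  obtain ⟨y1, hy1m, hy1⟩ := (scal_lt_iff G ys).mp hs1
  obtain ⟨y2, hy2m, hy2⟩ := (scal_lt_iff G ys).mp
    (lt_of_le_of_lt hx (EReal.coe_lt_coe_iff.mpr (by linarith : t < t + ε)))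
  have hmem : l • y1 + (1 - l) • y2 ∈ G (l • x' + (1 - l) • x) :=
    hG x' x l ⟨hl0.le, hl1.le⟩
      (Set.add_mem_add (Set.smul_mem_smul_set hy1m) (Set.smul_mem_smul_set hy2m))
  refine lt_of_le_of_lt (scal_le G ys hmem) ?_
  rw [hlin, EReal.coe_lt_coe_iff]
  rw [EReal.coe_lt_coe_iff] at hy1 hy2
  have : l * ys y1 + (1 - l) * ys y2 < l * s + (1 - l) * (t + ε) := by nlinarith
  have heq : l * s + (1 - l) * (t + ε) = t - l * (t - s) / 2 := by
    have h2 : (1 - l) * ε = l * (t - s) / 2 := by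
      rw [hε_def, mul_div_assoc', div_eq_div_iff (mul_pos two_pos h1l).ne' two_ne_zero]; ring
    linear_combination h2
  nlinarith

/-- Under Assumptions A and B, for convex and scalarly lower
semicontinuous `F : Y → 𝒢₊(Z)`, `G : X → 𝒫₊(Y)` and each `y* ∈ B_{Y*} \ {0}`,
`sup_{(x,y)} f(x,y,y*) = sup_{(x,y)} f̃(x,y,y*)`. -/
theorem stmt_15 {X Y Z : Type*}
    [AddCommGroup X] [Module ℝ X] [TopologicalSpace X] [IsTopologicalAddGroup X]
    [ContinuousSMul ℝ X] [LocallyConvexSpace ℝ X] [T2Space X]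
    [AddCommGroup Y] [Module ℝ Y] [TopologicalSpace Y] [IsTopologicalAddGroup Y]
    [ContinuousSMul ℝ Y] [LocallyConvexSpace ℝ Y] [T2Space Y]
    [AddCommGroup Z] [Module ℝ Z] [TopologicalSpace Z] [IsTopologicalAddGroup Z]
    [ContinuousSMul ℝ Z] [LocallyConvexSpace ℝ Z] [T2Space Z]
    (Yp : Set Y) (hYpconv : Convex ℝ Yp) (hYp0 : (0 : Y) ∈ Yp)
    (hYpcone : ∀ c : ℝ, 0 < c → c • Yp ⊆ Yp) (hYpcl : IsClosed Yp)
    (Zp : Set Z) (hZpconv : Convex ℝ Zp) (hZp0 : (0 : Z) ∈ Zp)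
    (hZpcone : ∀ c : ℝ, 0 < c → c • Zp ⊆ Zp) (hZpcl : IsClosed Zp)
    -- Assumption A: a convex weak*-compact cone generator of `Y₊⁺`
    (Bs : Set (WeakDual ℝ Y))
    (hBsub : ∀ b ∈ Bs, ∀ y ∈ Yp, 0 ≤ b y)
    (hBconv : Convex ℝ Bs) (hBcomp : IsCompact Bs)
    (hBgen : ∀ ys : WeakDual ℝ Y, (∀ y ∈ Yp, 0 ≤ ys y) → ys ≠ 0 →
      ∃ l : ℝ, 0 < l ∧ ∃ b ∈ Bs, ys = l • b)
    -- `F : Y → 𝒢₊(Z)` and `G : X → 𝒫₊(Y)`, convex and scalarly lower semicontinuous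
    (F : Y → Set Z) (hFval : ∀ y, F y = closure (convexHull ℝ (F y + Zp)))
    (G : X → Set Y) (hGval : ∀ x, G x + Yp = G x)
    (hFconv : SVConvex F) (hGconv : SVConvex G)
    (hFlsc : ∀ w : Z →L[ℝ] ℝ, (∀ z ∈ Zp, 0 ≤ w z) → w ≠ 0 →
      LowerSemicontinuous (scal F ⇑w))
    (hGlsc : ∀ w : WeakDual ℝ Y, (∀ y ∈ Yp, 0 ≤ w y) → w ≠ 0 →
      LowerSemicontinuous (scal G ⇑w))
    -- Assumption B
    (Xp : Set X)
    (hAsmpB :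
      (∀ ys ∈ Bs, ys ≠ (0 : WeakDual ℝ Y) → (⨅ x : X, scal G (⇑ys) x) = ⊥) ∨
      (IsClosed Xp ∧ Convex ℝ Xp ∧ (0 : X) ∈ Xp ∧ (∀ c : ℝ, 0 < c → c • Xp ⊆ Xp) ∧
        {x : X | ∀ l : X →L[ℝ] ℝ, (∀ w ∈ Xp, 0 ≤ l w) → l ≠ 0 → 0 < l x}.Nonempty ∧
        ∀ ys ∈ Bs, ys ≠ (0 : WeakDual ℝ Y) → ∀ x1 x2 : X,
          (x2 - x1 ∈ {x : X | ∀ l : X →L[ℝ] ℝ, (∀ w ∈ Xp, 0 ≤ l w) → l ≠ 0 → 0 < l x} ↔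
            scal G (⇑ys) x2 < scal G (⇑ys) x1)))
    -- the fixed dual elements
    (xs : X →L[ℝ] ℝ)
    (zs : Z →L[ℝ] ℝ) (hzs : ∀ z ∈ Zp, 0 ≤ zs z) (hzs0 : zs ≠ 0) :
    ∀ ys ∈ Bs, ys ≠ (0 : WeakDual ℝ Y) →
      (⨆ p : X × Y, fFun G F (⇑xs) (⇑ys) (⇑zs) p) =
        ⨆ p : X × Y, fTilde G F (⇑xs) (⇑ys) (⇑zs) p := by
  intro ys hysB hys0
  have hlin : ∀ (c : ℝ) (a b : Y), ys (c • a + (1 - c) • b) = c * ys a + (1 - c) * ys b := by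
    intro c a b; simp [map_add, map_smul]
  apply le_antisymm
  · apply iSup_le
    rintro ⟨x, y⟩
    show (if scal G (⇑ys) x ≤ ((ys y : ℝ) : EReal) then
        ((xs x : ℝ) : EReal) - scal F (⇑zs) y else ⊥) ≤ _
    split_ifs with h
    · have hex : ∃ x' : X, scal G (⇑ys) x' < ((ys y : ℝ) : EReal) := by
        rcases hAsmpB with ha | ⟨_, _, _, _, ⟨e, he⟩, hb⟩
        · have h1 : (⨅ x : X, scal G (⇑ys) x) < ((ys y : ℝ) : EReal) := by
            rw [ha ys hysB hys0]
            exact (EReal.coe_ne_bot _).bot_lt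
          exact iInf_lt_iff.mp h1
        · refine ⟨x + e, lt_of_lt_of_le ?_ h⟩
          exact (hb ys hysB hys0 x (x + e)).mp (by simpa using he)
      obtain ⟨x', hx'⟩ := hex
      rcases eq_top_or_lt_top (scal F (⇑zs) y) with hctop | hclt
      · rw [hctop, EReal.sub_top]; exact bot_le
      rcases eq_bot_or_bot_lt (scal F (⇑zs) y) with hcbot | hcbot
      · have hkey := scal_combo hGconv hlin h hx' (l := 1/2) (by norm_num) (by norm_num)
        have htop : fTilde G F (⇑xs) (⇑ys) (⇑zs)
            ((1/2 : ℝ) • x' + (1 - 1/2 : ℝ) • x, y) = ⊤ := by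
          show (if scal G (⇑ys) ((1/2 : ℝ) • x' + (1 - 1/2 : ℝ) • x) < ((ys y : ℝ) : EReal)
              then ((xs ((1/2 : ℝ) • x' + (1 - 1/2 : ℝ) • x) : ℝ) : EReal) - scal F (⇑zs) y
              else ⊥) = ⊤
          rw [if_pos hkey, hcbot, EReal.coe_sub_bot]
        exact le_top.trans (htop ▸ le_iSup (fTilde G F (⇑xs) (⇑ys) (⇑zs))
          ((1/2 : ℝ) • x' + (1 - 1/2 : ℝ) • x, y))
      · obtain ⟨cr, hcr⟩ : ∃ cr : ℝ, scal F (⇑zs) y = (cr : EReal) :=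
          ⟨(scal F (⇑zs) y).toReal, (EReal.coe_toReal hclt.ne hcbot.ne').symm⟩
        rw [hcr, ← EReal.coe_sub]
        apply le_of_forall_lt
        intro w hw
        obtain ⟨a, hwa, har⟩ := EReal.exists_between_coe_real hw
        rw [EReal.coe_lt_coe_iff] at har
        set D : ℝ := xs x - xs x' with hD
        have hgap : 0 < xs x - cr - a := by linarith
        set l : ℝ := min (1/2) ((xs x - cr - a) / (2 * (|D| + 1))) with hl
        have hD0 : (0 : ℝ) ≤ |D| := abs_nonneg _
        have hl0 : 0 < l := lt_min (by norm_num) (by positivity)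
        have hl1 : l < 1 := lt_of_le_of_lt (min_le_left _ _) (by norm_num)
        have hkey := scal_combo hGconv hlin h hx' hl0 hl1
        have hval : a < l * xs x' + (1 - l) * xs x - cr := by
          have h2 : l * |D| < xs x - cr - a := by
            have h3 : l ≤ (xs x - cr - a) / (2 * (|D| + 1)) := min_le_right _ _
            have h4 : l * (2 * (|D| + 1)) ≤ xs x - cr - a := by
              rw [le_div_iff₀ (by positivity)] at h3; linarith
            nlinarith
          have h5 : l * D ≤ l * |D| := by nlinarith [le_abs_self D]
          have h6 : l * xs x' + (1 - l) * xs x = xs x - l * D := by rw [hD]; ring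
          linarith
        refine lt_of_lt_of_le ?_ (le_iSup (fTilde G F (⇑xs) (⇑ys) (⇑zs))
          (l • x' + (1 - l) • x, y))
        show w < (if scal G (⇑ys) (l • x' + (1 - l) • x) < ((ys y : ℝ) : EReal)
            then ((xs (l • x' + (1 - l) • x) : ℝ) : EReal) - scal F (⇑zs) y
            else ⊥)
        rw [if_pos hkey, hcr, ← EReal.coe_sub]
        refine lt_of_lt_of_le hwa (EReal.coe_le_coe_iff.mpr ?_)
        have hxs : xs (l • x' + (1 - l) • x) = l * xs x' + (1 - l) * xs x := by
          rw [map_add, map_smul, map_smul, smul_eq_mul, smul_eq_mul]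
        rw [hxs]; linarith
    · exact bot_le
  · apply iSup_mono
    intro p
    unfold fFun fTilde
    split_ifs with h1 h2
    · exact le_rfl
    · exact absurd h1.le h2
    · exact bot_le
    · exact le_rfl
end

section
/- Let X be a topological vector space, Z a Hausdorff topological vector space preordered by a closed convex cone Z₊, and R : X → 2^Z a set-valued map all of whose values satisfy R(x) = cl(R(x) + Z₊). Then the graph gr(R) := {(x,z) : z ∈ R(x)} is closed in X×Z if and only if R is lattice-lower semicontinuous at every x ∈ X, i.e., R(x) ⊇ ⋂_{U ∈ 𝒩(X)} cl( ⋃_{x' ∈ x+U} R(x') ) for every x ∈ X, where 𝒩(X) is a neighborhood base of 0 in X. -/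
open Set Pointwise Filter

/-- For a set-valued map `R : X → ℱ₊(Z)` (i.e. `R x = cl(R x + Z₊)` for
all `x`), the graph of `R` is closed iff `R` is lattice-lower semicontinuous at every
point, where `𝒩(X)` is a neighborhood base of `0 ∈ X`. -/
theorem stmt_17 {X Z : Type*}
    [AddCommGroup X] [Module ℝ X] [TopologicalSpace X] [IsTopologicalAddGroup X]
    [ContinuousSMul ℝ X]
    [AddCommGroup Z] [Module ℝ Z] [TopologicalSpace Z] [IsTopologicalAddGroup Z]
    [ContinuousSMul ℝ Z] [T2Space Z]
    -- the preorder cone on `Z`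
    (Zp : Set Z) (hZpconv : Convex ℝ Zp) (hZp0 : (0 : Z) ∈ Zp)
    (hZpcone : ∀ c : ℝ, 0 < c → c • Zp ⊆ Zp) (hZpcl : IsClosed Zp)
    -- a neighborhood base `𝒩(X)` of `0 ∈ X`
    (N : Set (Set X)) (hN : (nhds (0 : X)).HasBasis (fun U : Set X => U ∈ N) id)
    -- `R : X → ℱ₊(Z)`
    (R : X → Set Z) (hRval : ∀ x, R x = closure (R x + Zp)) :
    IsClosed {p : X × Z | p.2 ∈ R p.1} ↔
      ∀ x : X, (⋂ U ∈ N, closure (⋃ u ∈ U, R (x + u))) ⊆ R x := by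
  constructor
  · intro h x z hz
    have hcl : (x, z) ∈ closure {p : X × Z | p.2 ∈ R p.1} := by
      rw [mem_closure_iff_nhds]
      intro t ht
      rw [nhds_prod_eq] at ht
      obtain ⟨A, hA, B, hB, hAB⟩ := Filter.mem_prod_iff.1 ht
      rw [← map_add_left_nhds_zero x, Filter.mem_map, hN.mem_iff] at hA
      obtain ⟨U, hUN, hUA⟩ := hA
      have hz' : z ∈ closure (⋃ u ∈ U, R (x + u)) := by
        have := hz
        simp only [mem_iInter] at this
        exact this U hUN
      rw [mem_closure_iff_nhds] at hz'
      obtain ⟨z', hz'B, hz'U⟩ := hz' B hB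
      simp only [mem_iUnion] at hz'U
      obtain ⟨u, hu, hzR⟩ := hz'U
      exact ⟨(x + u, z'), hAB ⟨hUA hu, hz'B⟩, hzR⟩
    rwa [h.closure_eq] at hcl
  · intro h
    rw [← isOpen_compl_iff, isOpen_iff_mem_nhds]
    intro ⟨x, z⟩ hxz
    by_contra hcon
    -- then (x,z) is in the closure of the graph
    have hcl : (x, z) ∈ closure {p : X × Z | p.2 ∈ R p.1} := by
      rw [mem_closure_iff_nhds]
      intro t ht
      by_contra hne
      rw [Set.not_nonempty_iff_eq_empty] at hne
      exact hcon (Filter.mem_of_superset ht (fun p hp hpg =>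
        (Set.eq_empty_iff_forall_notMem.1 hne p ⟨hp, hpg⟩)))
    -- show z ∈ the intersection, contradicting hxz
    apply hxz
    apply h x
    rw [mem_iInter₂]
    intro U hU
    rw [mem_closure_iff_nhds]
    intro t ht
    have hAB : ((fun u => x + u) '' U) ×ˢ t ∈ nhds (x, z) := by
      rw [nhds_prod_eq]
      exact Filter.prod_mem_prod
        (by rw [← map_add_left_nhds_zero x]; exact Filter.image_mem_map (hN.mem_of_mem hU)) ht
    rw [mem_closure_iff_nhds] at hcl
    obtain ⟨⟨x', z'⟩, ⟨hx', hz't⟩, hz'R⟩ := hcl _ hAB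
    obtain ⟨u, hu, rfl⟩ := hx'
    exact ⟨z', hz't, by simp only [mem_iUnion]; exact ⟨u, hu, hz'R⟩⟩
end

section
/- Let R : X → 𝒢₊(Z) be a set-valued map. Then R is convex (λR(x¹) + (1−λ)R(x²) ⊆ R(λx¹ + (1−λ)x²) for all x¹, x² ∈ X and λ ∈ [0,1]) if and only if for every z* ∈ Z*, the scalarization φ_{R,z*} is a convex extended-real function, i.e., its epigraph {(x,r) ∈ X×ℝ : φ_{R,z*}(x) ≤ r} is convex. -/
open Set Pointwise

/-- A set-valued map `R : X → 𝒢₊(Z)` is convex iff all of its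
scalarizations `φ_{R,z*}`, `z* ∈ Z*`, are convex (convex epigraphs). -/
theorem stmt_18 {X Z : Type*} [AddCommGroup X] [Module ℝ X]
    [AddCommGroup Z] [Module ℝ Z] [TopologicalSpace Z] [IsTopologicalAddGroup Z]
    [ContinuousSMul ℝ Z] [LocallyConvexSpace ℝ Z] [T2Space Z]
    -- the preorder cone on `Z`
    (Zp : Set Z) (hZpconv : Convex ℝ Zp) (hZp0 : (0 : Z) ∈ Zp)
    (hZpcone : ∀ c : ℝ, 0 < c → c • Zp ⊆ Zp) (hZpcl : IsClosed Zp)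
    -- `R : X → 𝒢₊(Z)`
    (R : X → Set Z) (hRval : ∀ x, R x = closure (convexHull ℝ (R x + Zp))) :
    (∀ x1 x2 : X, ∀ l ∈ Set.Icc (0 : ℝ) 1,
        l • R x1 + (1 - l) • R x2 ⊆ R (l • x1 + (1 - l) • x2)) ↔
      ∀ zs : Z →L[ℝ] ℝ,
        Convex ℝ {p : X × ℝ | scal R (⇑zs) p.1 ≤ ((p.2 : ℝ) : EReal)} := by
  constructor
  · -- convexity of R implies convex epigraphs
    intro hconv zs p hp q hq a b ha hb hab
    simp only [mem_setOf_eq] at hp hq ⊢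
    have hb' : b = 1 - a := by linarith
    subst hb'
    simp only [Prod.fst_add, Prod.smul_fst, Prod.snd_add, Prod.smul_snd, smul_eq_mul]
    set t : ℝ := a * p.2 + (1 - a) * q.2 with ht
    by_contra hcon
    push_neg at hcon
    obtain ⟨m, hm1, hm2⟩ := EReal.lt_iff_exists_real_btwn.mp hcon
    have hε : (0 : ℝ) < m - t := by
      have := EReal.coe_lt_coe_iff.mp hm1
      linarith
    set ε : ℝ := m - t with hεdef
    -- pick near-optimal points
    have hp' : scal R (⇑zs) p.1 < ((p.2 + ε : ℝ) : EReal) := by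
      refine lt_of_le_of_lt hp ?_
      exact_mod_cast (by linarith : p.2 < p.2 + ε)
    have hq' : scal R (⇑zs) q.1 < ((q.2 + ε : ℝ) : EReal) := by
      refine lt_of_le_of_lt hq ?_
      exact_mod_cast (by linarith : q.2 < q.2 + ε)
    simp only [scal, iInf_lt_iff] at hp' hq'
    obtain ⟨z1, hz1, hz1'⟩ := hp'
    obtain ⟨z2, hz2, hz2'⟩ := hq'
    have hz1r : zs z1 < p.2 + ε := EReal.coe_lt_coe_iff.mp hz1'
    have hz2r : zs z2 < q.2 + ε := EReal.coe_lt_coe_iff.mp hz2'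
    have hmem : a • z1 + (1 - a) • z2 ∈ R (a • p.1 + (1 - a) • q.1) :=
      hconv p.1 q.1 a ⟨ha, by linarith⟩
        (add_mem_add (smul_mem_smul_set hz1) (smul_mem_smul_set hz2))
    have hle : scal R (⇑zs) (a • p.1 + (1 - a) • q.1)
        ≤ ((zs (a • z1 + (1 - a) • z2) : ℝ) : EReal) := iInf₂_le _ hmem
    have hval : zs (a • z1 + (1 - a) • z2) = a * zs z1 + (1 - a) * zs z2 := by
      simp [map_add, map_smul]
    have hreal : a * zs z1 + (1 - a) * zs z2 ≤ m := by
      have h1 : a * zs z1 ≤ a * (p.2 + ε) :=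
        mul_le_mul_of_nonneg_left hz1r.le ha
      have h2 : (1 - a) * zs z2 ≤ (1 - a) * (q.2 + ε) :=
        mul_le_mul_of_nonneg_left hz2r.le (by linarith)
      have : a * (p.2 + ε) + (1 - a) * (q.2 + ε) = t + ε := by ring
      nlinarith
    have : scal R (⇑zs) (a • p.1 + (1 - a) • q.1) ≤ ((m : ℝ) : EReal) := by
      refine hle.trans ?_
      rw [hval]
      exact_mod_cast hreal
    exact absurd (this.trans_lt hm2) (lt_irrefl _)
  · -- convex epigraphs imply convexity of R
    intro h x1 x2 l hl z hz
    obtain ⟨u1, hu1, u2, hu2, rfl⟩ := hz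
    obtain ⟨z1, hz1, rfl⟩ := hu1
    obtain ⟨z2, hz2, rfl⟩ := hu2
    by_contra hzn
    have hclosed : IsClosed (R (l • x1 + (1 - l) • x2)) := by
      rw [hRval]; exact isClosed_closure
    have hconvx : Convex ℝ (R (l • x1 + (1 - l) • x2)) := by
      rw [hRval]; exact (convex_convexHull ℝ _).closure
    obtain ⟨f, u, hfu, hub⟩ := geometric_hahn_banach_point_closed hconvx hclosed hzn
    have hm1 : (x1, f z1) ∈ {p : X × ℝ | scal R (⇑f) p.1 ≤ ((p.2 : ℝ) : EReal)} := by
      exact (iInf₂_le z1 hz1 :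
        scal R (⇑f) x1 ≤ ((f z1 : ℝ) : EReal))
    have hm2 : (x2, f z2) ∈ {p : X × ℝ | scal R (⇑f) p.1 ≤ ((p.2 : ℝ) : EReal)} := by
      exact (iInf₂_le z2 hz2 :
        scal R (⇑f) x2 ≤ ((f z2 : ℝ) : EReal))
    have h3 := h f hm1 hm2 hl.1 (by linarith [hl.2]) (by ring : l + (1 - l) = 1)
    simp only [mem_setOf_eq, Prod.fst_add, Prod.smul_fst, Prod.snd_add, Prod.smul_snd,
      smul_eq_mul] at h3
    have hfz : f (l • z1 + (1 - l) • z2) = l * f z1 + (1 - l) * f z2 := by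
      simp [map_add, map_smul]
    have h4 : ((u : ℝ) : EReal) ≤ scal R (⇑f) (l • x1 + (1 - l) • x2) :=
      le_iInf₂ fun w hw => by exact_mod_cast (hub w hw).le
    have h5 : ((u : ℝ) : EReal) ≤ ((l * f z1 + (1 - l) * f z2 : ℝ) : EReal) :=
      h4.trans h3
    have : u ≤ l * f z1 + (1 - l) * f z2 := EReal.coe_le_coe_iff.mp h5
    rw [hfz] at hfu
    linarith
end

section
/- Let Z₊ ≠ Z, let R : X → 𝒢₊(Z) be a set-valued map, and fix x ∈ X. If R is scalarly lower semicontinuous at x, i.e., the scalarization φ_{R,z*} is lower semicontinuous at x for every z* ∈ Z₊⁺ \ {0}, then R is lattice-lower semicontinuous at x: R(x) ⊇ ⋂_{U ∈ 𝒩(X)} cl( ⋃_{x' ∈ x+U} R(x') ), where 𝒩(X) is a neighborhood base of 0 in X. -/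
open Set Pointwise Filter

/-- Let `Z₊ ≠ Z` and `R : X → 𝒢₊(Z)`. If `R` is scalarly lower
semicontinuous at `x` (i.e. `φ_{R,z*}(x) ≤ sup_{U ∈ 𝒩(X)} inf_{x' ∈ x+U} φ_{R,z*}(x')`
for every `z* ∈ Z₊⁺ \ {0}`), then `R` is lattice-lower semicontinuous at `x`. -/
theorem stmt_19 {X Z : Type*}
    [AddCommGroup X] [Module ℝ X] [TopologicalSpace X] [IsTopologicalAddGroup X]
    [ContinuousSMul ℝ X]
    [AddCommGroup Z] [Module ℝ Z] [TopologicalSpace Z] [IsTopologicalAddGroup Z]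
    [ContinuousSMul ℝ Z] [LocallyConvexSpace ℝ Z] [T2Space Z]
    -- the preorder cone on `Z`, a proper subset of `Z`
    (Zp : Set Z) (hZpconv : Convex ℝ Zp) (hZp0 : (0 : Z) ∈ Zp)
    (hZpcone : ∀ c : ℝ, 0 < c → c • Zp ⊆ Zp) (hZpcl : IsClosed Zp)
    (hZpne : Zp ≠ (univ : Set Z))
    -- a neighborhood base `𝒩(X)` of `0 ∈ X`
    (N : Set (Set X)) (hN : (nhds (0 : X)).HasBasis (fun U : Set X => U ∈ N) id)
    -- `R : X → 𝒢₊(Z)`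
    (R : X → Set Z) (hRval : ∀ x', R x' = closure (convexHull ℝ (R x' + Zp)))
    (x : X)
    -- `R` is scalarly lower semicontinuous at `x`
    (hlsc : ∀ zs : Z →L[ℝ] ℝ, (∀ z ∈ Zp, 0 ≤ zs z) → zs ≠ 0 →
      scal R (⇑zs) x ≤ ⨆ U ∈ N, ⨅ u ∈ U, scal R (⇑zs) (x + u)) :
    (⋂ U ∈ N, closure (⋃ u ∈ U, R (x + u))) ⊆ R x := by
  intro z hz
  by_contra hzR
  -- For every positive nonzero functional, `scal R zs x ≤ zs z`.
  have key : ∀ zs : Z →L[ℝ] ℝ, (∀ p ∈ Zp, 0 ≤ zs p) → zs ≠ 0 →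
      scal R (⇑zs) x ≤ ((zs z : ℝ) : EReal) := by
    intro zs hpos hne
    refine (hlsc zs hpos hne).trans (iSup₂_le fun U hU => ?_)
    have hzc : z ∈ closure (⋃ u ∈ U, R (x + u)) := mem_iInter₂.1 hz U hU
    set m : EReal := ⨅ u ∈ U, scal R (⇑zs) (x + u) with hm
    have hsub : (⋃ u ∈ U, R (x + u)) ⊆ {w : Z | m ≤ ((zs w : ℝ) : EReal)} := by
      intro w hw
      rcases mem_iUnion₂.1 hw with ⟨u, hu, hwu⟩
      calc m ≤ scal R (⇑zs) (x + u) := iInf₂_le u hu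
        _ ≤ ((zs w : ℝ) : EReal) := iInf₂_le w hwu
    have hcl : IsClosed {w : Z | m ≤ ((zs w : ℝ) : EReal)} := by
      have hc : Continuous fun w : Z => ((zs w : ℝ) : EReal) :=
        continuous_coe_real_ereal.comp zs.continuous
      exact isClosed_le continuous_const hc
    exact closure_minimal hsub hcl hzc
  rcases (R x).eq_empty_or_nonempty with hRe | ⟨w₀, hw₀⟩
  · -- `R x = ∅`: use a functional separating a point outside `Zp` from `Zp`.
    obtain ⟨z₀, hz₀⟩ : ∃ z₀, z₀ ∉ Zp := by
      by_contra h; push_neg at h; exact hZpne (eq_univ_of_forall h)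
    obtain ⟨f, u, hfz₀, hf⟩ := geometric_hahn_banach_point_closed hZpconv hZpcl hz₀
    have hu0 : u < 0 := by simpa using hf 0 hZp0
    have hpos : ∀ p ∈ Zp, 0 ≤ f p := by
      intro p hp
      by_contra hneg; push_neg at hneg
      have ht : ∀ t : ℝ, 0 < t → u < t * f p := by
        intro t ht
        have hmem : t • p ∈ Zp := hZpcone t ht (smul_mem_smul_set hp)
        simpa [smul_eq_mul] using hf _ hmem
      have htp : 0 < (u - 1) / f p := div_pos_of_neg_of_neg (by linarith) hneg
      have := ht _ htp
      rw [div_mul_cancel₀ _ (ne_of_lt hneg)] at this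
      linarith
    have hne : f ≠ 0 := by
      intro h; rw [h] at hfz₀; simp at hfz₀; linarith
    have := key f hpos hne
    rw [scal, hRe] at this
    simp at this
  · -- `R x` is nonempty, closed and convex: separate `z` from it.
    have hRcl : IsClosed (R x) := by rw [hRval x]; exact isClosed_closure
    have hRconv : Convex ℝ (R x) := by
      rw [hRval x]; exact (convex_convexHull ℝ _).closure
    obtain ⟨f, u, hfz, hf⟩ := geometric_hahn_banach_point_closed hRconv hRcl hzR
    have hadd : R x + Zp ⊆ R x := by
      calc R x + Zp ⊆ closure (convexHull ℝ (R x + Zp)) :=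
            (subset_convexHull ℝ _).trans subset_closure
        _ = R x := (hRval x).symm
    have hpos : ∀ p ∈ Zp, 0 ≤ f p := by
      intro p hp
      by_contra hneg; push_neg at hneg
      have ht : ∀ t : ℝ, 0 < t → u < f w₀ + t * f p := by
        intro t ht
        have hmem : w₀ + t • p ∈ R x :=
          hadd (add_mem_add hw₀ (hZpcone t ht (smul_mem_smul_set hp)))
        simpa [smul_eq_mul] using hf _ hmem
      have hu : u < f w₀ := hf w₀ hw₀
      have htp : 0 < (u - 1 - f w₀) / f p := div_pos_of_neg_of_neg (by linarith) hneg
      have := ht _ htp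
      rw [div_mul_cancel₀ _ (ne_of_lt hneg)] at this
      linarith
    have hne : f ≠ 0 := by
      intro h
      have h1 := hfz; have h2 := hf w₀ hw₀
      rw [h] at h1 h2; simp at h1 h2; linarith
    have h1 : ((u : ℝ) : EReal) ≤ scal R (⇑f) x :=
      le_iInf₂ fun w hw => by exact_mod_cast (hf w hw).le
    have h2 := h1.trans (key f hpos hne)
    rw [EReal.coe_le_coe_iff] at h2
    linarith
end
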